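/- Theorem 3 (convergence for finite sum problems): let E = ℝⁿ (n-dimensional Euclidean space) and let N_max ≥ 1 be an integer. For each integer N with 1 ≤ N ≤ N_max let f^{(N)} : E → ℝ be convex and attain its minimum over Ω. Let (x_k)_{k≥1} ⊆ Ω, (N_k)_{k≥1} ⊆ ℕ with x_1 ∈ Ω and 1 ≤ N_1 ≤ N_max, and for every k ≥ 1: x_{k+1} = P(x_k − α_k·ζ_k·q_k⁻¹·g_k), where g_k is a subgradient of f^{(N_k)} at x_k, q_k = max(1, ‖g_k‖), ζ̲ ≤ ζ_k ≤ ζ̄, 1/k ≤ α_k ≤ C₂/k; and, with θ_k = ‖x_{k+1} − x_k‖ and h(N) = (N_max − N)/N_max, the sample size satisfies: N_k < N_{k+1} ≤ N_max if θ_k < h(N_k), and N_{k+1} = N_k otherwise. Then N_k = N_max for all sufficiently large k, and the sequence (x_k) converges to a point x̃ ∈ Ω with f^{(N_max)}(x̃) = min_{y ∈ Ω} f^{(N_max)}(y). -/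

import Mathlib

open scoped RealInnerProductSpace
open Filter Finset

/-- quasi-Fejér convergence. -/
lemma quasiFejer_aux {a e : ℕ → ℝ} (ha : ∀ k, 0 ≤ a k) (he0 : ∀ k, 0 ≤ e k)
    (he : Summable e) (k₀ : ℕ) (h : ∀ k, k₀ ≤ k → a (k + 1) ≤ a k + e k) :
    ∃ L, Tendsto a atTop (nhds L) := by
  set T : ℕ → ℝ := fun k => ∑' j, e (j + k) with hT
  have hT0 : ∀ k, 0 ≤ T k := fun k => tsum_nonneg fun j => he0 _
  have hTrec : ∀ k, T k = e k + T (k + 1) := by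
    intro k
    have hs : Summable fun j => e (j + k) := (summable_nat_add_iff k).2 he
    have h0 := hs.tsum_eq_zero_add
    simp only [hT]
    rw [h0, zero_add]
    congr 1
    exact tsum_congr fun j => by congr 1; omega
  have hb : ∀ k, k₀ ≤ k → a (k + 1) + T (k + 1) ≤ a k + T k := by
    intro k hk
    have := h k hk
    rw [hTrec k]
    linarith
  have hanti : Antitone fun j => a (k₀ + j) + T (k₀ + j) := by
    apply antitone_nat_of_succ_le
    intro j
    have h2 := hb (k₀ + j) (Nat.le_add_right _ _)
    have h3 : k₀ + (j + 1) = k₀ + j + 1 := rfl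
    rw [h3]
    exact h2
  have hbdd : BddBelow (Set.range fun j => a (k₀ + j) + T (k₀ + j)) := by
    refine ⟨0, ?_⟩
    rintro _ ⟨j, rfl⟩
    exact add_nonneg (ha _) (hT0 _)
  have hc := tendsto_atTop_ciInf hanti hbdd
  set L' := ⨅ j, (a (k₀ + j) + T (k₀ + j))
  have hAT : Tendsto (fun k => a k + T k) atTop (nhds L') := by
    rw [← tendsto_add_atTop_iff_nat k₀]
    have : (fun k => a (k + k₀) + T (k + k₀)) = fun j => a (k₀ + j) + T (k₀ + j) := by
      funext j; rw [Nat.add_comm]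
    rw [this]; exact hc
  have hTz : Tendsto T atTop (nhds 0) := tendsto_sum_nat_add e
  refine ⟨L', ?_⟩
  have := hAT.sub hTz
  simpa using this

lemma teleAux {a d e : ℕ → ℝ} (K : ℕ)
    (h : ∀ k, K ≤ k → a (k + 1) ≤ a k - d k + e k) :
    ∀ m, K ≤ m → a m + ∑ k ∈ Finset.Ico K m, d k ≤ a K + ∑ k ∈ Finset.Ico K m, e k := by
  intro m hm
  induction m with
  | zero => interval_cases K; simp
  | succ m ih =>
    rcases Nat.lt_or_ge m K with hmK | hmK
    · have : K = m + 1 := by omega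
      subst this; simp
    · have h1 := ih hmK
      have h2 := h m hmK
      rw [Finset.sum_Ico_succ_top hmK, Finset.sum_Ico_succ_top hmK]
      linarith

set_option maxHeartbeats 2000000 in
/-- Theorem 3: convergence for finite sum problems. -/
theorem stmt_12 {n : ℕ}
    (Ω : Set (EuclideanSpace ℝ (Fin n))) (hΩne : Ω.Nonempty)
    (hΩclosed : IsClosed Ω) (hΩconv : Convex ℝ Ω)
    (P : EuclideanSpace ℝ (Fin n) → EuclideanSpace ℝ (Fin n))
    (hPnonexp : ∀ u v, ‖P u - P v‖ ≤ ‖u - v‖)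
    (hPmem : ∀ u, P u ∈ Ω)
    (hPfix : ∀ y ∈ Ω, P y = y)
    (C₂ ζlow ζbar : ℝ) (hC₂ : 0 < C₂) (hζlow : 0 < ζlow) (hζord : ζlow ≤ ζbar)
    (Nmax : ℕ) (hNmax : 1 ≤ Nmax)
    (F : ℕ → EuclideanSpace ℝ (Fin n) → ℝ)
    (hFconv : ∀ N : ℕ, 1 ≤ N → N ≤ Nmax → ConvexOn ℝ Set.univ (F N))
    (hFattain : ∀ N : ℕ, 1 ≤ N → N ≤ Nmax → ∃ xs ∈ Ω, ∀ y ∈ Ω, F N xs ≤ F N y)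
    (x g : ℕ → EuclideanSpace ℝ (Fin n)) (N : ℕ → ℕ) (α ζ : ℕ → ℝ)
    (hx1 : x 1 ∈ Ω) (hN1 : 1 ≤ N 1) (hN1max : N 1 ≤ Nmax)
    (hg : ∀ k : ℕ, 1 ≤ k → ∀ y, F (N k) (x k) + ⟪g k, y - x k⟫ ≤ F (N k) y)
    (hζ : ∀ k : ℕ, 1 ≤ k → ζlow ≤ ζ k ∧ ζ k ≤ ζbar)
    (hα : ∀ k : ℕ, 1 ≤ k → 1 / (k : ℝ) ≤ α k ∧ α k ≤ C₂ / k)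
    (hupd : ∀ k : ℕ, 1 ≤ k →
      x (k + 1) = P (x k - (α k * ζ k * (max 1 ‖g k‖)⁻¹) • g k))
    (hNup : ∀ k : ℕ, 1 ≤ k →
      (‖x (k + 1) - x k‖ < ((Nmax : ℝ) - N k) / Nmax →
        N k < N (k + 1) ∧ N (k + 1) ≤ Nmax) ∧
      (¬ (‖x (k + 1) - x k‖ < ((Nmax : ℝ) - N k) / Nmax) → N (k + 1) = N k)) :
    (∃ k₀ : ℕ, ∀ k : ℕ, k₀ ≤ k → N k = Nmax) ∧
    ∃ xtil ∈ Ω, (∀ y ∈ Ω, F Nmax xtil ≤ F Nmax y) ∧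
      Filter.Tendsto x Filter.atTop (nhds xtil) := by
  have hζb : 0 < ζbar := lt_of_lt_of_le hζlow hζord
  have hcast : ∀ k : ℕ, 1 ≤ k → (0:ℝ) < k := fun k hk => by exact_mod_cast hk
  -- all iterates are in Ω
  have hxΩ : ∀ k, 1 ≤ k → x k ∈ Ω := by
    intro k hk
    match k, hk with
    | 1, _ => exact hx1
    | (m+2), _ => rw [hupd (m+1) (by omega)]; exact hPmem _
  have hq1 : ∀ k, (1:ℝ) ≤ max 1 ‖g k‖ := fun k => le_max_left _ _
  have hq0 : ∀ k, (0:ℝ) < max 1 ‖g k‖ := fun k => lt_of_lt_of_le one_pos (hq1 k)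
  have hα0 : ∀ k, 1 ≤ k → 0 < α k := fun k hk =>
    lt_of_lt_of_le (one_div_pos.mpr (hcast k hk)) (hα k hk).1
  have hζ0 : ∀ k, 1 ≤ k → 0 < ζ k := fun k hk => lt_of_lt_of_le hζlow (hζ k hk).1
  have htpos : ∀ k, 1 ≤ k → 0 ≤ α k * ζ k * (max 1 ‖g k‖)⁻¹ := fun k hk =>
    mul_nonneg (mul_nonneg (hα0 k hk).le (hζ0 k hk).le) (inv_nonneg.mpr (hq0 k).le)
  -- step norm bound
  have hsnorm : ∀ k, 1 ≤ k → ‖(α k * ζ k * (max 1 ‖g k‖)⁻¹) • g k‖ ≤ α k * ζ k := by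
    intro k hk
    rw [norm_smul, Real.norm_eq_abs, abs_of_nonneg (htpos k hk)]
    have h1 : (max 1 ‖g k‖)⁻¹ * ‖g k‖ ≤ 1 := by
      rw [← div_eq_inv_mul]
      exact (div_le_one (hq0 k)).mpr (le_max_right _ _)
    calc α k * ζ k * (max 1 ‖g k‖)⁻¹ * ‖g k‖
        = α k * ζ k * ((max 1 ‖g k‖)⁻¹ * ‖g k‖) := by ring
      _ ≤ α k * ζ k * 1 := by
          apply mul_le_mul_of_nonneg_left h1
          exact mul_nonneg (hα0 k hk).le (hζ0 k hk).le
      _ = α k * ζ k := mul_one _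
  have hαζ : ∀ k, 1 ≤ k → α k * ζ k ≤ C₂ * ζbar / k := by
    intro k hk
    have h1 := (hα k hk).2
    have h2 := (hζ k hk).2
    calc α k * ζ k ≤ (C₂ / k) * ζbar :=
          mul_le_mul h1 h2 (hζ0 k hk).le (by positivity)
      _ = C₂ * ζbar / k := by ring
  have hθ : ∀ k, 1 ≤ k → ‖x (k+1) - x k‖ ≤ C₂ * ζbar / k := by
    intro k hk
    have h1 : P (x k) = x k := hPfix _ (hxΩ k hk)
    rw [hupd k hk]
    calc ‖P (x k - (α k * ζ k * (max 1 ‖g k‖)⁻¹) • g k) - x k‖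
        = ‖P (x k - (α k * ζ k * (max 1 ‖g k‖)⁻¹) • g k) - P (x k)‖ := by rw [h1]
      _ ≤ ‖x k - (α k * ζ k * (max 1 ‖g k‖)⁻¹) • g k - x k‖ := hPnonexp _ _
      _ = ‖(α k * ζ k * (max 1 ‖g k‖)⁻¹) • g k‖ := by rw [sub_sub_cancel_left, norm_neg]
      _ ≤ α k * ζ k := hsnorm k hk
      _ ≤ C₂ * ζbar / k := hαζ k hk
  -- N monotonicity facts
  have hNle : ∀ k, 1 ≤ k → N k ≤ Nmax := by
    intro k hk
    induction k with
    | zero => omega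
    | succ m ih =>
      rcases Nat.lt_or_ge m 1 with hm | hm
      · have : m = 0 := by omega
        subst this; exact hN1max
      · by_cases hc : ‖x (m + 1) - x m‖ < ((Nmax : ℝ) - N m) / Nmax
        · exact ((hNup m hm).1 hc).2
        · rw [(hNup m hm).2 hc]; exact ih hm
  have hNmono : ∀ k, 1 ≤ k → N k ≤ N (k+1) := by
    intro k hk
    by_cases hc : ‖x (k + 1) - x k‖ < ((Nmax : ℝ) - N k) / Nmax
    · exact ((hNup k hk).1 hc).1.le
    · rw [(hNup k hk).2 hc]
  have hNge1 : ∀ k, 1 ≤ k → 1 ≤ N k := by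
    intro k hk
    induction k with
    | zero => omega
    | succ m ih =>
      rcases Nat.lt_or_ge m 1 with hm | hm
      · have : m = 0 := by omega
        subst this; exact hN1
      · exact le_trans (ih hm) (hNmono m hm)
  have hNfix : ∀ k, 1 ≤ k → N k = Nmax → N (k+1) = Nmax := by
    intro k hk hNk
    have hcond : ¬ (‖x (k + 1) - x k‖ < ((Nmax : ℝ) - N k) / Nmax) := by
      rw [hNk, sub_self, zero_div]
      exact not_lt.mpr (norm_nonneg _)
    rw [(hNup k hk).2 hcond, hNk]
  -- choose K large
  obtain ⟨K₀, hK₀⟩ := exists_nat_gt (C₂ * ζbar * Nmax)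
  set K := K₀ + 1 with hKdef
  have hK1 : 1 ≤ K := by omega
  have hNmax0 : (0:ℝ) < Nmax := by exact_mod_cast hNmax
  have hKbig : ∀ k, K ≤ k → C₂ * ζbar / k < 1 / Nmax := by
    intro k hk
    have hk0 : (0:ℝ) < k := hcast k (le_trans hK1 hk)
    rw [div_lt_div_iff₀ hk0 hNmax0, one_mul]
    have h1 : (K:ℝ) ≤ k := by exact_mod_cast hk
    have h2 : (K₀:ℝ) < K := by exact_mod_cast Nat.lt_succ_self K₀
    calc C₂ * ζbar * Nmax < K₀ := hK₀
      _ ≤ k := by linarith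
  have hstep : ∀ k, K ≤ k → N k < Nmax → N k + 1 ≤ N (k+1) := by
    intro k hk hlt
    have hk1 : 1 ≤ k := le_trans hK1 hk
    have hcond : ‖x (k + 1) - x k‖ < ((Nmax : ℝ) - N k) / Nmax := by
      have h1 := hθ k hk1
      have h2 := hKbig k hk
      have hcast2 : (N k : ℝ) + 1 ≤ (Nmax : ℝ) := by exact_mod_cast hlt
      have h3 : (1:ℝ) / Nmax ≤ ((Nmax : ℝ) - N k) / Nmax := by
        gcongr
        · linarith
      linarith
    exact ((hNup k hk1).1 hcond).1
  -- N reaches Nmax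
  have hNK : ∀ j, N (K + j) = Nmax ∨ N K + j ≤ N (K + j) := by
    intro j
    induction j with
    | zero => right; rfl
    | succ j ih =>
      have hKj1 : 1 ≤ K + j := by omega
      rcases ih with h | h
      · left; exact hNfix (K + j) hKj1 h
      · by_cases hlt : N (K + j) < Nmax
        · right
          have h5 := hstep (K + j) (by omega) hlt
          have h6 : N (K + (j + 1)) = N (K + j + 1) := rfl
          omega
        · have h2 := hNle (K + j) hKj1
          have h3 : N (K + j) = Nmax := by omega
          left
          exact hNfix (K + j) hKj1 h3
  have hk₀N : N (K + Nmax) = Nmax := by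
    rcases hNK Nmax with h | h
    · exact h
    · have h1 := hNle (K + Nmax) (by omega)
      have h2 := hNge1 K (by omega)
      omega
  set k₀ := K + Nmax with hk₀def
  have hk₀1 : 1 ≤ k₀ := by omega
  have hNfinal : ∀ k, k₀ ≤ k → N k = Nmax := by
    intro k hk
    induction k with
    | zero => omega
    | succ m ih =>
      rcases Nat.lt_or_ge m k₀ with hm | hm
      · have : m + 1 = k₀ := by omega
        rw [this]; exact hk₀N
      · exact hNfix m (le_trans hk₀1 hm) (ih hm)
  refine ⟨⟨k₀, hNfinal⟩, ?_⟩
  obtain ⟨xs, hxsΩ, hxsmin⟩ := hFattain Nmax hNmax le_rfl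
  -- the key Fejér-type inequality
  have key : ∀ k, k₀ ≤ k → ∀ y ∈ Ω, ‖x (k+1) - y‖^2 ≤
      ‖x k - y‖^2 - 2 * (α k * ζ k * (max 1 ‖g k‖)⁻¹) * (F Nmax (x k) - F Nmax y)
        + (C₂ * ζbar / k)^2 := by
    intro k hk y hy
    have hk1 : 1 ≤ k := le_trans hk₀1 hk
    set t := α k * ζ k * (max 1 ‖g k‖)⁻¹ with ht
    have ht0 : 0 ≤ t := htpos k hk1
    have h1 : ‖x (k+1) - y‖ ≤ ‖(x k - y) - t • g k‖ := by
      rw [hupd k hk1]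
      calc ‖P (x k - t • g k) - y‖ = ‖P (x k - t • g k) - P y‖ := by rw [hPfix y hy]
        _ ≤ ‖x k - t • g k - y‖ := hPnonexp _ _
        _ = ‖(x k - y) - t • g k‖ := by rw [sub_right_comm]
    have h2 : ‖x (k+1) - y‖^2 ≤ ‖(x k - y) - t • g k‖^2 :=
      pow_le_pow_left₀ (norm_nonneg _) h1 2
    have h3 : ‖(x k - y) - t • g k‖^2 =
        ‖x k - y‖^2 - 2 * (t * ⟪g k, x k - y⟫) + t^2 * ‖g k‖^2 := by
      rw [norm_sub_sq_real, real_inner_smul_right, real_inner_comm, norm_smul,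
        Real.norm_eq_abs, mul_pow, sq_abs]
    have h4 : F Nmax (x k) - F Nmax y ≤ ⟪g k, x k - y⟫ := by
      have h5 := hg k hk1 y
      rw [hNfinal k hk] at h5
      have e1 : ⟪g k, y - x k⟫ = ⟪g k, y⟫ - ⟪g k, x k⟫ := inner_sub_right _ _ _
      have e2 : ⟪g k, x k - y⟫ = ⟪g k, x k⟫ - ⟪g k, y⟫ := inner_sub_right _ _ _
      linarith
    have h6 : t * ‖g k‖ ≤ C₂ * ζbar / k := by
      have h7 := hsnorm k hk1
      rw [norm_smul, Real.norm_eq_abs, abs_of_nonneg ht0] at h7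
      exact le_trans h7 (hαζ k hk1)
    have h8 : t^2 * ‖g k‖^2 ≤ (C₂ * ζbar / k)^2 := by
      have h9 : (t * ‖g k‖)^2 ≤ (C₂ * ζbar / k)^2 :=
        pow_le_pow_left₀ (mul_nonneg ht0 (norm_nonneg _)) h6 2
      calc t^2 * ‖g k‖^2 = (t * ‖g k‖)^2 := by ring
        _ ≤ _ := h9
    have h10 : 2 * t * (F Nmax (x k) - F Nmax y) ≤ 2 * t * ⟪g k, x k - y⟫ :=
      mul_le_mul_of_nonneg_left h4 (by linarith)
    linarith
  -- error sequence
  set e : ℕ → ℝ := fun k => (C₂ * ζbar / k)^2 with hedef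
  have he0 : ∀ k, 0 ≤ e k := fun k => sq_nonneg _
  have hesum : Summable e := by
    have h1 : Summable (fun k : ℕ => (C₂ * ζbar)^2 * (1 / (k:ℝ)^2)) :=
      (Real.summable_one_div_nat_pow.mpr one_lt_two).mul_left _
    refine h1.congr fun k => ?_
    simp only [hedef]
    rw [div_pow, mul_one_div]
  -- boundedness
  have hbnd : ∀ m, k₀ ≤ m → ‖x m - xs‖^2 ≤ ‖x k₀ - xs‖^2 + ∑' j, e j := by
    intro m hm
    have h1 := teleAux (a := fun k => ‖x k - xs‖^2)
      (d := fun k => 2 * (α k * ζ k * (max 1 ‖g k‖)⁻¹) * (F Nmax (x k) - F Nmax xs))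
      (e := e) k₀ (fun k hk => key k hk xs hxsΩ) m hm
    have h2 : 0 ≤ ∑ k ∈ Finset.Ico k₀ m,
        2 * (α k * ζ k * (max 1 ‖g k‖)⁻¹) * (F Nmax (x k) - F Nmax xs) := by
      apply Finset.sum_nonneg
      intro k hk
      have hk1 : 1 ≤ k := le_trans hk₀1 (Finset.mem_Ico.mp hk).1
      have h3 : F Nmax xs ≤ F Nmax (x k) := hxsmin _ (hxΩ k hk1)
      have h4 := htpos k hk1
      nlinarith
    have h3 : ∑ k ∈ Finset.Ico k₀ m, e k ≤ ∑' j, e j :=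
      hesum.sum_le_tsum _ (fun j _ => he0 j)
    linarith
  set R := Real.sqrt (‖x k₀ - xs‖^2 + ∑' j, e j) with hRdef
  have hxB : ∀ m, k₀ ≤ m → ‖x m - xs‖ ≤ R := by
    intro m hm
    have h1 := Real.sqrt_le_sqrt (hbnd m hm)
    rwa [Real.sqrt_sq (norm_nonneg _)] at h1
  set R₁ := R + ‖xs‖ with hR₁def
  have hxB1 : ∀ m, k₀ ≤ m → ‖x m‖ ≤ R₁ := by
    intro m hm
    calc ‖x m‖ = ‖(x m - xs) + xs‖ := by rw [sub_add_cancel]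
      _ ≤ ‖x m - xs‖ + ‖xs‖ := norm_add_le _ _
      _ ≤ R₁ := by have := hxB m hm; rw [hR₁def]; linarith
  have hR₁0 : 0 ≤ R₁ := add_nonneg (Real.sqrt_nonneg _) (norm_nonneg _)
  -- continuity and boundedness of F Nmax on a ball
  have hfc : Continuous (F Nmax) :=
    ((hFconv Nmax hNmax le_rfl).locallyLipschitz).continuous
  obtain ⟨z, hz, hzmax'⟩ := (isCompact_closedBall (0 : EuclideanSpace ℝ (Fin n))
    (R₁ + 1)).exists_isMaxOn ⟨0, Metric.mem_closedBall_self (by linarith)⟩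
    hfc.continuousOn
  have hzmax := isMaxOn_iff.mp hzmax'
  set M := F Nmax z with hMdef
  have hxk₀ball : x k₀ ∈ Metric.closedBall (0 : EuclideanSpace ℝ (Fin n)) (R₁ + 1) := by
    rw [mem_closedBall_zero_iff]
    have := hxB1 k₀ le_rfl
    linarith
  have hMxs : F Nmax xs ≤ M :=
    le_trans (hxsmin _ (hxΩ k₀ hk₀1)) (hzmax _ hxk₀ball)
  -- subgradient bound
  have hgb : ∀ k, k₀ ≤ k → ‖g k‖ ≤ M - F Nmax xs := by
    intro k hk
    have hk1 : 1 ≤ k := le_trans hk₀1 hk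
    by_cases hgz : g k = 0
    · rw [hgz, norm_zero]; linarith
    · have hgn : 0 < ‖g k‖ := norm_pos_iff.mpr hgz
      set y := x k + ‖g k‖⁻¹ • g k with hydef
      have hyb : y ∈ Metric.closedBall (0 : EuclideanSpace ℝ (Fin n)) (R₁ + 1) := by
        rw [mem_closedBall_zero_iff]
        calc ‖y‖ ≤ ‖x k‖ + ‖‖g k‖⁻¹ • g k‖ := norm_add_le _ _
          _ = ‖x k‖ + 1 := by
              rw [norm_smul, Real.norm_eq_abs, abs_of_nonneg (inv_nonneg.mpr hgn.le),
                inv_mul_cancel₀ hgn.ne']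
          _ ≤ R₁ + 1 := by have := hxB1 k hk; linarith
      have h1 := hg k hk1 y
      rw [hNfinal k hk] at h1
      have h2 : ⟪g k, y - x k⟫ = ‖g k‖ := by
        rw [show y - x k = ‖g k‖⁻¹ • g k from by rw [hydef]; abel]
        rw [real_inner_smul_right, real_inner_self_eq_norm_sq, sq, ← mul_assoc,
          inv_mul_cancel₀ hgn.ne', one_mul]
      have h3 : F Nmax xs ≤ F Nmax (x k) := hxsmin _ (hxΩ k hk1)
      have h4 : F Nmax y ≤ M := hzmax y hyb
      linarith
  set Q := max 1 (M - F Nmax xs) with hQdef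
  have hQ1 : (1:ℝ) ≤ Q := le_max_left _ _
  have hQ0 : (0:ℝ) < Q := lt_of_lt_of_le one_pos hQ1
  have hqQ : ∀ k, k₀ ≤ k → max 1 ‖g k‖ ≤ Q := fun k hk =>
    max_le_max le_rfl (hgb k hk)
  have htlow : ∀ k, k₀ ≤ k →
      ζlow * Q⁻¹ * (1/(k:ℝ)) ≤ α k * ζ k * (max 1 ‖g k‖)⁻¹ := by
    intro k hk
    have hk1 : 1 ≤ k := le_trans hk₀1 hk
    have hk0 : (0:ℝ) < k := hcast k hk1
    have h1 : 1/(k:ℝ) ≤ α k := (hα k hk1).1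
    have h2 : ζlow ≤ ζ k := (hζ k hk1).1
    have h3 : Q⁻¹ ≤ (max 1 ‖g k‖)⁻¹ := inv_anti₀ (hq0 k) (hqQ k hk)
    calc ζlow * Q⁻¹ * (1/(k:ℝ)) = (1/(k:ℝ)) * ζlow * Q⁻¹ := by ring
      _ ≤ α k * ζ k * (max 1 ‖g k‖)⁻¹ := by
          apply mul_le_mul _ h3 (inv_nonneg.mpr hQ0.le)
            (mul_nonneg (hα0 k hk1).le (hζ0 k hk1).le)
          exact mul_le_mul h1 h2 hζlow.le (hα0 k hk1).le
  -- liminf of objective values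
  have hfreq : ∀ ε : ℝ, 0 < ε → ∀ m : ℕ, ∃ k, m ≤ k ∧ k₀ ≤ k ∧
      F Nmax (x k) < F Nmax xs + ε := by
    intro ε hε m
    by_contra hcon
    push_neg at hcon
    set K₁ := max m k₀ with hK₁def
    have hK₁k₀ : k₀ ≤ K₁ := le_max_right _ _
    have htele := teleAux (a := fun k => ‖x k - xs‖^2)
      (d := fun k => 2 * (α k * ζ k * (max 1 ‖g k‖)⁻¹) * (F Nmax (x k) - F Nmax xs))
      (e := e) K₁ (fun k hk => key k (le_trans hK₁k₀ hk) xs hxsΩ)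
    set c₁ := 2 * ε * (ζlow * Q⁻¹) with hc₁def
    have hc₁ : 0 < c₁ := by positivity
    have hdk : ∀ k, K₁ ≤ k →
        c₁ * (1/(k:ℝ)) ≤ 2 * (α k * ζ k * (max 1 ‖g k‖)⁻¹) * (F Nmax (x k) - F Nmax xs) := by
      intro k hk
      have hk1 : 1 ≤ k := le_trans (le_trans hk₀1 hK₁k₀) hk
      have hk0 : (0:ℝ) < k := hcast k hk1
      have h1 := htlow k (le_trans hK₁k₀ hk)
      have h2 : F Nmax xs + ε ≤ F Nmax (x k) :=
        hcon k (le_trans (le_max_left m k₀) hk) (le_trans hK₁k₀ hk)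
      have h3 : (0:ℝ) ≤ 1/(k:ℝ) := by positivity
      have h4 : (0:ℝ) ≤ ζlow * Q⁻¹ * (1/(k:ℝ)) := by positivity
      calc c₁ * (1/(k:ℝ)) = 2 * (ζlow * Q⁻¹ * (1/(k:ℝ))) * ε := by rw [hc₁def]; ring
        _ ≤ 2 * (α k * ζ k * (max 1 ‖g k‖)⁻¹) * (F Nmax (x k) - F Nmax xs) := by
            apply mul_le_mul (by linarith) (by linarith) hε.le
            have := htpos k hk1; linarith
    set B := ‖x K₁ - xs‖^2 + ∑' j, e j with hBdef
    have hB : ∀ m', K₁ ≤ m' → ∑ k ∈ Finset.Ico K₁ m', c₁ * (1/(k:ℝ)) ≤ B := by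
      intro m' hm'
      have h1 := htele m' hm'
      have h2 : ∑ k ∈ Finset.Ico K₁ m', c₁ * (1/(k:ℝ)) ≤
          ∑ k ∈ Finset.Ico K₁ m',
            2 * (α k * ζ k * (max 1 ‖g k‖)⁻¹) * (F Nmax (x k) - F Nmax xs) :=
        Finset.sum_le_sum fun k hk => hdk k (Finset.mem_Ico.mp hk).1
      have h3 : ∑ k ∈ Finset.Ico K₁ m', e k ≤ ∑' j, e j :=
        hesum.sum_le_tsum _ (fun j _ => he0 j)
      have h4 : 0 ≤ ‖x m' - xs‖^2 := sq_nonneg _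
      rw [hBdef]
      linarith
    have hsum2 : Summable (fun k : ℕ => if K₁ ≤ k then (1/(k:ℝ)) else 0) := by
      apply summable_of_sum_range_le (c := B / c₁)
      · intro k; split
        · positivity
        · exact le_refl 0
      · intro m'
        rcases le_or_gt m' K₁ with hm' | hm'
        · have hz0 : ∑ i ∈ Finset.range m', (if K₁ ≤ i then (1/(i:ℝ)) else 0) = 0 :=
            Finset.sum_eq_zero fun i hi => by
              rw [if_neg]; have := Finset.mem_range.mp hi; omega
          rw [hz0]
          have h5 := hB K₁ le_rfl
          simp only [Finset.Ico_self, Finset.sum_empty] at h5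
          positivity
        · have heq : ∑ i ∈ Finset.range m', (if K₁ ≤ i then (1/(i:ℝ)) else 0) =
              ∑ k ∈ Finset.Ico K₁ m', 1/(k:ℝ) := by
            rw [← Finset.sum_filter]
            congr 1
            ext i
            simp only [Finset.mem_filter, Finset.mem_range, Finset.mem_Ico]
            omega
          rw [heq, le_div_iff₀ hc₁]
          have h5 := hB m' hm'.le
          calc (∑ k ∈ Finset.Ico K₁ m', 1/(k:ℝ)) * c₁
              = ∑ k ∈ Finset.Ico K₁ m', c₁ * (1/(k:ℝ)) := by
                rw [Finset.sum_mul]; exact Finset.sum_congr rfl fun k _ => by ring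
            _ ≤ B := h5
    have hsum3 : Summable (fun k : ℕ => 1/((k:ℝ))) := by
      have h6 : Summable (fun k : ℕ => if K₁ ≤ k + K₁ then (1/((k + K₁ : ℕ):ℝ)) else 0) :=
        (summable_nat_add_iff K₁).mpr hsum2
      have h7 : Summable (fun k : ℕ => 1/((k + K₁ : ℕ):ℝ)) := by
        refine h6.congr fun k => ?_
        rw [if_pos (Nat.le_add_left _ _)]
      exact (summable_nat_add_iff K₁).mp h7
    exact Real.not_summable_one_div_natCast hsum3
  -- extract a minimizing convergent subsequence
  choose φ hφ1 hφ2 hφ3 using fun j : ℕ => hfreq (1/((j:ℝ)+1)) (by positivity) j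
  have hybnd : ∀ j, x (φ j) ∈ Metric.closedBall (0 : EuclideanSpace ℝ (Fin n)) R₁ :=
    fun j => mem_closedBall_zero_iff.mpr (hxB1 _ (hφ2 j))
  obtain ⟨xt, hxtcl, ψ, hψmono, hψtend⟩ :=
    tendsto_subseq_of_bounded Metric.isBounded_closedBall hybnd
  have hxtΩ : xt ∈ Ω :=
    hΩclosed.mem_of_tendsto hψtend
      (Filter.Eventually.of_forall fun j => hxΩ _ (le_trans hk₀1 (hφ2 _)))
  have hxtxs : F Nmax xt ≤ F Nmax xs := by
    have h1 : Tendsto (fun j => F Nmax (x (φ (ψ j)))) atTop (nhds (F Nmax xt)) :=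
      (hfc.tendsto xt).comp hψtend
    have h2 : Tendsto (fun j : ℕ => F Nmax xs + 1/((j:ℝ)+1)) atTop (nhds (F Nmax xs)) := by
      simpa using tendsto_const_nhds.add (tendsto_one_div_add_atTop_nhds_zero_nat (𝕜 := ℝ))
    apply le_of_tendsto_of_tendsto' h1 h2
    intro j
    have h3 := hφ3 (ψ j)
    have h4 : 1/((ψ j:ℝ)+1) ≤ 1/((j:ℝ)+1) := by
      apply one_div_le_one_div_of_le (by positivity)
      have h5 : (j:ℝ) ≤ ψ j := by exact_mod_cast hψmono.le_apply
      linarith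
    linarith
  have hxtmin : ∀ y ∈ Ω, F Nmax xt ≤ F Nmax y :=
    fun y hy => le_trans hxtxs (hxsmin y hy)
  -- convergence of the whole sequence to xt
  have hrec2 : ∀ k, k₀ ≤ k → ‖x (k+1) - xt‖^2 ≤ ‖x k - xt‖^2 + e k := by
    intro k hk
    have hk1 : 1 ≤ k := le_trans hk₀1 hk
    have h1 := key k hk xt hxtΩ
    have h2 : 0 ≤ 2 * (α k * ζ k * (max 1 ‖g k‖)⁻¹) * (F Nmax (x k) - F Nmax xt) := by
      have h3 := htpos k hk1
      have h4 := hxtmin _ (hxΩ k hk1)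
      nlinarith
    have he' : e k = (C₂ * ζbar / (k:ℝ))^2 := rfl
    rw [he']
    linarith
  obtain ⟨L, hL⟩ := quasiFejer_aux (a := fun k => ‖x k - xt‖^2) (fun k => sq_nonneg _) he0 hesum k₀ hrec2
  have hidx : Tendsto (fun j => φ (ψ j)) atTop atTop :=
    tendsto_atTop_mono (fun j => le_trans hψmono.le_apply (hφ1 (ψ j))) tendsto_id
  have hsub0 : Tendsto (fun j => ‖x (φ (ψ j)) - xt‖^2) atTop (nhds 0) := by
    have h1 : Tendsto (fun j => x (φ (ψ j)) - xt) atTop (nhds 0) := by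
      have := hψtend.sub (tendsto_const_nhds (x := xt))
      simpa using this
    have h2 := (h1.norm).pow 2
    simpa using h2
  have hsubL : Tendsto (fun j => ‖x (φ (ψ j)) - xt‖^2) atTop (nhds L) := hL.comp hidx
  have hL0 : L = 0 := tendsto_nhds_unique hsubL hsub0
  have hnrm : Tendsto (fun k => ‖x k - xt‖) atTop (nhds 0) := by
    have h1 : Tendsto (fun k => Real.sqrt (‖x k - xt‖^2)) atTop (nhds (Real.sqrt 0)) :=
      (Real.continuous_sqrt.tendsto _).comp (hL0 ▸ hL)
    simpa [Real.sqrt_sq, norm_nonneg] using h1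
  refine ⟨xt, hxtΩ, hxtmin, ?_⟩
  rw [tendsto_iff_norm_sub_tendsto_zero]
  exact hnrm
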